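/- Let 𝓗₁, 𝓗₂ be complex Hilbert spaces, H₁, H₂ bounded self-adjoint operators on 𝓗₁, 𝓗₂ respectively, A a bounded self-adjoint operator on 𝓗₂, and I ⊂ ℝ a Borel set. Assume the Mourre estimate χ_I(H₂)·i[H₂,A]·χ_I(H₂) ≥ c·χ_I(H₂) holds for some c > 0, and that the spectral projection χ_I(H₁) is a compact operator. Then for H₀ := H₁ ⊕ H₂ on 𝓗₁ ⊕ 𝓗₂ and 𝐀 := 0 ⊕ A one has χ_I(H₀)·i[H₀,𝐀]·χ_I(H₀) ≥ c·χ_I(H₀) + K with K := −c·(χ_I(H₁) ⊕ 0) compact. -/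

import Mathlib

open Complex

variable {𝓗₁ 𝓗₂ : Type*}
  [NormedAddCommGroup 𝓗₁] [InnerProductSpace ℂ 𝓗₁] [CompleteSpace 𝓗₁]
  [NormedAddCommGroup 𝓗₂] [InnerProductSpace ℂ 𝓗₂] [CompleteSpace 𝓗₂]

/-- The block-diagonal direct sum `T₁ ⊕ T₂` acting on the Hilbert space
`𝓗₁ ⊕ 𝓗₂` (realized as `WithLp 2 (𝓗₁ × 𝓗₂)`). -/
noncomputable def dirSum (T₁ : 𝓗₁ →L[ℂ] 𝓗₁) (T₂ : 𝓗₂ →L[ℂ] 𝓗₂) :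
    WithLp 2 (𝓗₁ × 𝓗₂) →L[ℂ] WithLp 2 (𝓗₁ × 𝓗₂) :=
  ((WithLp.prodContinuousLinearEquiv 2 ℂ 𝓗₁ 𝓗₂).symm : 𝓗₁ × 𝓗₂ →L[ℂ] WithLp 2 (𝓗₁ × 𝓗₂))
    ∘L (T₁.prodMap T₂)
    ∘L ((WithLp.prodContinuousLinearEquiv 2 ℂ 𝓗₁ 𝓗₂) : WithLp 2 (𝓗₁ × 𝓗₂) →L[ℂ] 𝓗₁ × 𝓗₂)

/-- The commutator `i[H,A] = i(HA − AH)` of bounded operators. -/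
noncomputable def commI {𝓗 : Type*} [NormedAddCommGroup 𝓗] [InnerProductSpace ℂ 𝓗]
    (H A : 𝓗 →L[ℂ] 𝓗) : 𝓗 →L[ℂ] 𝓗 :=
  Complex.I • (H ∘L A - A ∘L H)

lemma dirSum_apply_fst (T₁ : 𝓗₁ →L[ℂ] 𝓗₁) (T₂ : 𝓗₂ →L[ℂ] 𝓗₂) (x : WithLp 2 (𝓗₁ × 𝓗₂)) :
    (dirSum T₁ T₂ x).fst = T₁ x.fst := rfl

lemma dirSum_apply_snd (T₁ : 𝓗₁ →L[ℂ] 𝓗₁) (T₂ : 𝓗₂ →L[ℂ] 𝓗₂) (x : WithLp 2 (𝓗₁ × 𝓗₂)) :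
    (dirSum T₁ T₂ x).snd = T₂ x.snd := rfl

lemma dirSum_isPositive {T₁ : 𝓗₁ →L[ℂ] 𝓗₁} {T₂ : 𝓗₂ →L[ℂ] 𝓗₂}
    (h₁ : T₁.IsPositive) (h₂ : T₂.IsPositive) : (dirSum T₁ T₂).IsPositive := by
  constructor
  · intro x y
    have e₁ := h₁.isSelfAdjoint.isSymmetric x.fst y.fst
    have e₂ := h₂.isSelfAdjoint.isSymmetric x.snd y.snd
    simp only [WithLp.prod_inner_apply]
    exact congrArg₂ (· + ·) e₁ e₂
  · intro x
    have n₁ := h₁.inner_nonneg_left x.fst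
    have n₂ := h₂.inner_nonneg_left x.snd
    simp only [ContinuousLinearMap.reApplyInnerSelf, WithLp.prod_inner_apply,
      dirSum_apply_fst, dirSum_apply_snd, map_add]
    exact add_nonneg (Complex.nonneg_iff.mp n₁).1 (Complex.nonneg_iff.mp n₂).1

/-- **Mourre estimate for the two-channel Hamiltonian.**
Let `H₁, H₂` be bounded self-adjoint operators, `A` a bounded self-adjoint operator on
`𝓗₂`, and let `P₁ = χ_I(H₁)`, `P₂ = χ_I(H₂)` be the spectral projections of `H₁, H₂`
onto a Borel set `I` (formalized as orthogonal projections commuting with `H₁`, `H₂`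
respectively), with `P₁` compact. If the Mourre estimate
`P₂ · i[H₂,A] · P₂ ≥ c·P₂` holds for some `c > 0`, then for `H₀ := H₁ ⊕ H₂` and
`𝐀 := 0 ⊕ A` one has `(P₁ ⊕ P₂) · i[H₀,𝐀] · (P₁ ⊕ P₂) ≥ c·(P₁ ⊕ P₂) + K` with
`K := −c·(P₁ ⊕ 0)` compact. -/
theorem mourre_estimate_direct_sum
    (H₁ P₁ : 𝓗₁ →L[ℂ] 𝓗₁) (H₂ A P₂ : 𝓗₂ →L[ℂ] 𝓗₂) (I : Set ℝ) (c : ℝ) (hc : 0 < c)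
    (hH₁ : IsSelfAdjoint H₁) (hH₂ : IsSelfAdjoint H₂) (hA : IsSelfAdjoint A)
    (hP₁sa : IsSelfAdjoint P₁) (hP₁idem : P₁ ∘L P₁ = P₁) (hP₁comm : H₁ ∘L P₁ = P₁ ∘L H₁)
    (hP₂sa : IsSelfAdjoint P₂) (hP₂idem : P₂ ∘L P₂ = P₂) (hP₂comm : H₂ ∘L P₂ = P₂ ∘L H₂)
    (hP₁compact : IsCompactOperator P₁)
    (hMourre : (P₂ ∘L commI H₂ A ∘L P₂ - (c : ℂ) • P₂).IsPositive) :
    ((dirSum P₁ P₂) ∘L commI (dirSum H₁ H₂) (dirSum 0 A) ∘L (dirSum P₁ P₂)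
        - ((c : ℂ) • dirSum P₁ P₂ + (-(c : ℂ)) • dirSum P₁ 0)).IsPositive
      ∧ IsCompactOperator ((-(c : ℂ)) • dirSum P₁ (0 : 𝓗₂ →L[ℂ] 𝓗₂)) := by
  constructor
  · -- reduce to positivity of `dirSum 0 (P₂ ∘L commI H₂ A ∘L P₂ - c • P₂)`
    have key : (dirSum P₁ P₂) ∘L commI (dirSum H₁ H₂) (dirSum 0 A) ∘L (dirSum P₁ P₂)
        - ((c : ℂ) • dirSum P₁ P₂ + (-(c : ℂ)) • dirSum P₁ 0)
        = dirSum 0 (P₂ ∘L commI H₂ A ∘L P₂ - (c : ℂ) • P₂) := by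
      ext x
      refine WithLp.ofLp_injective _ (Prod.ext ?_ ?_)
      · show _ = ((0 : 𝓗₁ →L[ℂ] 𝓗₁) x.fst)
        simp [dirSum, commI]
      · show _ = ((P₂ ∘L commI H₂ A ∘L P₂ - (c : ℂ) • P₂) x.snd)
        simp [dirSum, commI, smul_sub]
    rw [key]
    exact dirSum_isPositive ContinuousLinearMap.isPositive_zero hMourre
  · have h0 : IsCompactOperator (dirSum P₁ (0 : 𝓗₂ →L[ℂ] 𝓗₂)) := by
      have h1 : IsCompactOperator (⇑P₁ ∘
          ⇑((ContinuousLinearMap.fst ℂ 𝓗₁ 𝓗₂) ∘L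
            ((WithLp.prodContinuousLinearEquiv 2 ℂ 𝓗₁ 𝓗₂ :
              WithLp 2 (𝓗₁ × 𝓗₂) →L[ℂ] 𝓗₁ × 𝓗₂)))) :=
        hP₁compact.comp_clm _
      have h2 := h1.continuous_comp (g :=
          ⇑(((WithLp.prodContinuousLinearEquiv 2 ℂ 𝓗₁ 𝓗₂).symm :
              𝓗₁ × 𝓗₂ →L[ℂ] WithLp 2 (𝓗₁ × 𝓗₂)) ∘L (ContinuousLinearMap.inl ℂ 𝓗₁ 𝓗₂)))
        (ContinuousLinearMap.continuous _)
      have : (⇑(((WithLp.prodContinuousLinearEquiv 2 ℂ 𝓗₁ 𝓗₂).symm :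
              𝓗₁ × 𝓗₂ →L[ℂ] WithLp 2 (𝓗₁ × 𝓗₂)) ∘L (ContinuousLinearMap.inl ℂ 𝓗₁ 𝓗₂)) ∘
          ⇑P₁ ∘ ⇑((ContinuousLinearMap.fst ℂ 𝓗₁ 𝓗₂) ∘L
            ((WithLp.prodContinuousLinearEquiv 2 ℂ 𝓗₁ 𝓗₂ :
              WithLp 2 (𝓗₁ × 𝓗₂) →L[ℂ] 𝓗₁ × 𝓗₂))))
          = ⇑(dirSum P₁ (0 : 𝓗₂ →L[ℂ] 𝓗₂)) := by
        funext x
        simp [dirSum]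
        rfl
      rw [this] at h2
      exact h2
    have := h0.smul (-(c : ℂ))
    simpa [funext_iff] using this
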